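/- Let u ∈ C^* and W(x,y) = u^2/(xy) + u^2 x + u x y + u y + u/x on (C^*)^2. Then the set of critical points of W in (C^*)^2 equals { (x, -u) : x ∈ C^*, x^2 + x = 1/u } ∪ { (x, 1/x^2) : x ∈ C^*, u x^3 = x + 1 }. -/

import Mathlib

/-- For u ∈ ℂ* and W(x,y) = u²/(xy) + u²x + uxy + uy + u/x on (ℂ*)², the set of
critical points of W (where ∂W/∂x = -u²/(x²y) + u² + uy - u/x² and
∂W/∂y = -u²/(xy²) + ux + u both vanish) equals
{ (x,-u) : x² + x = 1/u } ∪ { (x,1/x²) : ux³ = x + 1 }. -/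
theorem stmt_4 (u : ℂ) (hu : u ≠ 0) :
    {p : ℂ × ℂ | p.1 ≠ 0 ∧ p.2 ≠ 0 ∧
        -u^2 / (p.1^2 * p.2) + u^2 + u * p.2 - u / p.1^2 = 0 ∧
        -u^2 / (p.1 * p.2^2) + u * p.1 + u = 0} =
      {p : ℂ × ℂ | ∃ x : ℂ, x ≠ 0 ∧ p = (x, -u) ∧ x^2 + x = 1 / u} ∪
      {p : ℂ × ℂ | ∃ x : ℂ, x ≠ 0 ∧ p = (x, 1 / x^2) ∧ u * x^3 = x + 1} := by
  ext ⟨x, y⟩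
  simp only [Set.mem_setOf_eq, Set.mem_union, Prod.mk.injEq]
  constructor
  · rintro ⟨hx, hy, h1, h2⟩
    field_simp at h1 h2
    have key : (x^2*y - 1)*(u+y) = 0 := by
      have h3 : (u*x^2) * ((x^2*y - 1)*(u+y)) = 0 := by linear_combination x^2 * h1
      rcases mul_eq_zero.mp h3 with h | h
      · exact absurd h (mul_ne_zero hu (pow_ne_zero 2 hx))
      · exact h
    rcases mul_eq_zero.mp key with h | h
    · have hxy : y = 1/x^2 := by field_simp; linear_combination h
      right
      refine ⟨x, hx, ⟨rfl, hxy⟩, ?_⟩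
      subst hxy
      field_simp at h2
      have h4 : (u*x) * (u*x^3 - (x+1)) = 0 := by linear_combination (-x) * h2
      rcases mul_eq_zero.mp h4 with h5 | h5
      · exact absurd h5 (mul_ne_zero hu hx)
      · linear_combination h5
    · have hyu : y = -u := by linear_combination h
      left
      refine ⟨x, hx, ⟨rfl, hyu⟩, ?_⟩
      subst hyu
      field_simp
      have h5 : u^2 * ((x^2+x)*u - 1) = 0 := by linear_combination h2
      rcases mul_eq_zero.mp h5 with h6 | h6
      · exact absurd h6 (pow_ne_zero 2 hu)
      · linear_combination h6
  · rintro (⟨x, hx, ⟨rfl, rfl⟩, h⟩ | ⟨x, hx, ⟨rfl, rfl⟩, h⟩)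
    · have h' : u * x^2 + u * x = 1 := by field_simp at h; linear_combination h
      refine ⟨hx, neg_ne_zero.mpr hu, ?_, ?_⟩
      · field_simp
        ring
      · field_simp
        linear_combination h'
    · have hx2 : (1:ℂ)/x^2 ≠ 0 := one_div_ne_zero (pow_ne_zero 2 hx)
      refine ⟨hx, hx2, ?_, ?_⟩
      · field_simp
        ring
      · field_simp
        linear_combination (-u) * h
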